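/- Under hypotheses H1–H2 (and with σ₂ = (∂F₂/∂I)(S⁰, 0) well defined), system (3) admits a single-strain-2 equilibrium, i.e. a triple (S̃, Ṽ₁, Ĩ₂) with S̃, Ṽ₁, Ĩ₂ > 0 satisfying Λ − F₂(S̃, Ĩ₂) − λS̃ = 0, rS̃ − (μ + kĨ₂)Ṽ₁ = 0 and F₂(S̃, Ĩ₂) + kĨ₂Ṽ₁ − α₂Ĩ₂ = 0, if and only if R₂ > 1. Moreover, if −α₂rμ − α₂μ² + kΛr < 0 then this equilibrium is unique, while if −α₂rμ − α₂μ² + kΛr > 0 then there is at most one such equilibrium with Ĩ₂ in the interval [(−rα₂ − α₂μ + √(rα₂(rα₂ + α₂μ + kΛ)))/(α₂k), Λ/α₂]. -/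

import Mathlib

set_option maxHeartbeats 4000000 in
/-- Theorem 4.5(2): under H1–H2, system (3) admits a single-strain-2
equilibrium iff R₂ = σ₂/α₂ + krΛ/(α₂μλ) > 1, with σ₂ = ∂F₂/∂I(S⁰,0). If
−α₂rμ − α₂μ² + kΛr < 0 it is unique; if −α₂rμ − α₂μ² + kΛr > 0 there is at most one
such equilibrium with Ĩ₂ in the stated interval. -/
theorem strain2_equilibrium_exists_iff
    (Λ r μ k α₁ α₂ lam : ℝ)
    (hΛ : 0 < Λ) (hr : 0 < r) (hμ : 0 < μ) (hk : 0 < k)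
    (hα₁ : μ < α₁) (hα₂ : μ < α₂) (hlam : lam = r + μ)
    (F₁ F₂ f₁ f₂ F₁S F₁I F₂S F₂I f₁S f₁I f₂S f₂I : ℝ → ℝ → ℝ)
    (hF₁nn : ∀ S I : ℝ, 0 ≤ S → 0 ≤ I → 0 ≤ F₁ S I)
    (hF₂nn : ∀ S I : ℝ, 0 ≤ S → 0 ≤ I → 0 ≤ F₂ S I)
    (hF₁C1 : ContDiffOn ℝ 1 (fun p : ℝ × ℝ => F₁ p.1 p.2) {p : ℝ × ℝ | 0 ≤ p.1 ∧ 0 ≤ p.2})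
    (hF₂C1 : ContDiffOn ℝ 1 (fun p : ℝ × ℝ => F₂ p.1 p.2) {p : ℝ × ℝ | 0 ≤ p.1 ∧ 0 ≤ p.2})
    (hf₁C1 : ContDiffOn ℝ 1 (fun p : ℝ × ℝ => f₁ p.1 p.2) {p : ℝ × ℝ | 0 ≤ p.1 ∧ 0 ≤ p.2})
    (hf₂C1 : ContDiffOn ℝ 1 (fun p : ℝ × ℝ => f₂ p.1 p.2) {p : ℝ × ℝ | 0 ≤ p.1 ∧ 0 ≤ p.2})
    (hH1₁ : ∀ S I : ℝ, F₁ S I = I * f₁ S I)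
    (hH1₂ : ∀ S I : ℝ, F₂ S I = I * f₂ S I)
    (hF₁zero : ∀ S I : ℝ, 0 ≤ S → 0 ≤ I → F₁ 0 I = 0 ∧ F₁ S 0 = 0)
    (hF₂zero : ∀ S I : ℝ, 0 ≤ S → 0 ≤ I → F₂ 0 I = 0 ∧ F₂ S 0 = 0)
    (hdF₁S : ∀ S I : ℝ, 0 ≤ S → 0 ≤ I → HasDerivAt (fun x => F₁ x I) (F₁S S I) S)
    (hdF₁I : ∀ S I : ℝ, 0 ≤ S → 0 ≤ I → HasDerivAt (fun y => F₁ S y) (F₁I S I) I)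
    (hdF₂S : ∀ S I : ℝ, 0 ≤ S → 0 ≤ I → HasDerivAt (fun x => F₂ x I) (F₂S S I) S)
    (hdF₂I : ∀ S I : ℝ, 0 ≤ S → 0 ≤ I → HasDerivAt (fun y => F₂ S y) (F₂I S I) I)
    (hdf₁S : ∀ S I : ℝ, 0 ≤ S → 0 ≤ I → HasDerivAt (fun x => f₁ x I) (f₁S S I) S)
    (hdf₁I : ∀ S I : ℝ, 0 ≤ S → 0 ≤ I → HasDerivAt (fun y => f₁ S y) (f₁I S I) I)
    (hdf₂S : ∀ S I : ℝ, 0 ≤ S → 0 ≤ I → HasDerivAt (fun x => f₂ x I) (f₂S S I) S)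
    (hdf₂I : ∀ S I : ℝ, 0 ≤ S → 0 ≤ I → HasDerivAt (fun y => f₂ S y) (f₂I S I) I)
    (hH2f₁S : ∀ S I : ℝ, 0 ≤ S → 0 ≤ I → 0 < f₁S S I)
    (hH2f₁I : ∀ S I : ℝ, 0 ≤ S → 0 ≤ I → f₁I S I ≤ 0)
    (hH2f₂S : ∀ S I : ℝ, 0 ≤ S → 0 ≤ I → 0 < f₂S S I)
    (hH2f₂I : ∀ S I : ℝ, 0 ≤ S → 0 ≤ I → f₂I S I ≤ 0)
    (R₂ : ℝ) (hR₂ : R₂ = F₂I (Λ / lam) 0 / α₂ + (k * r * Λ) / (α₂ * μ * lam)) :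
    ((∃ St Vt It : ℝ, 0 < St ∧ 0 < Vt ∧ 0 < It ∧
        Λ - F₂ St It - lam * St = 0 ∧ r * St - (μ + k * It) * Vt = 0 ∧
        F₂ St It + k * It * Vt - α₂ * It = 0) ↔ 1 < R₂) ∧
    (-(α₂ * r * μ) - α₂ * μ ^ 2 + k * Λ * r < 0 →
      ∀ St Vt It St' Vt' It' : ℝ,
        (0 < St ∧ 0 < Vt ∧ 0 < It ∧ Λ - F₂ St It - lam * St = 0 ∧
          r * St - (μ + k * It) * Vt = 0 ∧ F₂ St It + k * It * Vt - α₂ * It = 0) →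
        (0 < St' ∧ 0 < Vt' ∧ 0 < It' ∧ Λ - F₂ St' It' - lam * St' = 0 ∧
          r * St' - (μ + k * It') * Vt' = 0 ∧ F₂ St' It' + k * It' * Vt' - α₂ * It' = 0) →
        St = St' ∧ Vt = Vt' ∧ It = It') ∧
    (0 < -(α₂ * r * μ) - α₂ * μ ^ 2 + k * Λ * r →
      ∀ St Vt It St' Vt' It' : ℝ,
        (0 < St ∧ 0 < Vt ∧ 0 < It ∧ Λ - F₂ St It - lam * St = 0 ∧
          r * St - (μ + k * It) * Vt = 0 ∧ F₂ St It + k * It * Vt - α₂ * It = 0 ∧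
          It ∈ Set.Icc ((-(r * α₂) - α₂ * μ +
            Real.sqrt (r * α₂ * (r * α₂ + α₂ * μ + k * Λ))) / (α₂ * k)) (Λ / α₂)) →
        (0 < St' ∧ 0 < Vt' ∧ 0 < It' ∧ Λ - F₂ St' It' - lam * St' = 0 ∧
          r * St' - (μ + k * It') * Vt' = 0 ∧ F₂ St' It' + k * It' * Vt' - α₂ * It' = 0 ∧
          It' ∈ Set.Icc ((-(r * α₂) - α₂ * μ +
            Real.sqrt (r * α₂ * (r * α₂ + α₂ * μ + k * Λ))) / (α₂ * k)) (Λ / α₂)) →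
        St = St' ∧ Vt = Vt' ∧ It = It') := by
  
  subst hlam
  have hα₂0 : 0 < α₂ := hμ.trans hα₂
  have hlam0 : (0:ℝ) < r + μ := by linarith
  have hS00 : (0:ℝ) ≤ Λ / (r + μ) := le_of_lt (div_pos hΛ hlam0)
  -- monotonicity of f₂ in S and antitonicity in I
  have hmonoS : ∀ I, 0 ≤ I → MonotoneOn (fun S => f₂ S I) (Set.Ici 0) := by
    intro I hI
    apply monotoneOn_of_deriv_nonneg (convex_Ici 0)
    · intro x hx
      exact (hdf₂S x I hx hI).continuousAt.continuousWithinAt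
    · intro x hx
      rw [interior_Ici] at hx
      exact (hdf₂S x I (le_of_lt hx) hI).differentiableAt.differentiableWithinAt
    · intro x hx
      rw [interior_Ici] at hx
      rw [(hdf₂S x I hx.le hI).deriv]
      exact (hH2f₂S x I hx.le hI).le
  have hantiI : ∀ S, 0 ≤ S → AntitoneOn (fun y => f₂ S y) (Set.Ici 0) := by
    intro S hS
    apply antitoneOn_of_deriv_nonpos (convex_Ici 0)
    · intro x hx
      exact (hdf₂I S x hS hx).continuousAt.continuousWithinAt
    · intro x hx
      rw [interior_Ici] at hx
      exact (hdf₂I S x hS hx.le).differentiableAt.differentiableWithinAt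
    · intro x hx
      rw [interior_Ici] at hx
      rw [(hdf₂I S x hS hx.le).deriv]
      exact hH2f₂I S x hS hx.le
  -- σ₂ = f₂ S⁰ 0
  have hσ : F₂I (Λ / (r + μ)) 0 = f₂ (Λ / (r + μ)) 0 := by
    have h1 := hdF₂I (Λ / (r + μ)) 0 hS00 le_rfl
    have h2 : HasDerivAt (fun y => F₂ (Λ / (r + μ)) y) (f₂ (Λ / (r + μ)) 0) 0 := by
      have h3 := (hasDerivAt_id (0:ℝ)).mul (hdf₂I (Λ / (r + μ)) 0 hS00 le_rfl)
      simp only [id_eq, one_mul, zero_mul, add_zero, mul_zero] at h3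
      have heq : (fun y => F₂ (Λ / (r + μ)) y) = fun y => y * f₂ (Λ / (r + μ)) y :=
        funext fun y => hH1₂ _ y
      rw [heq]
      exact h3
    exact h1.unique h2
  -- characterization of equilibria
  have hchar : ∀ St Vt It : ℝ, 0 < St → 0 < Vt → 0 < It →
      Λ - F₂ St It - (r + μ) * St = 0 → r * St - (μ + k * It) * Vt = 0 →
      F₂ St It + k * It * Vt - α₂ * It = 0 →
      ((Λ - α₂*It) * (μ + k*It) = St * (μ * (r + μ + k*It)) ∧
       Vt * (μ + k*It) = r * St ∧
       f₂ St It + k * Vt = α₂ ∧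
       α₂ * It < Λ ∧ St * (r + μ) ≤ Λ) := by
    intro St Vt It hSt hVt hIt e1 e2 e3
    rw [hH1₂] at e1 e3
    have hkIt : 0 < k * It := mul_pos hk hIt
    have hm : 0 < μ + k * It := by linarith
    have hfk : f₂ St It + k * Vt = α₂ := by
      have h3' : It * (f₂ St It + k * Vt - α₂) = 0 := by linear_combination e3
      have h4 := (mul_eq_zero.mp h3').resolve_left (ne_of_gt hIt)
      linarith
    have hE : (Λ - α₂*It) * (μ + k*It) = St * (μ * (r + μ + k*It)) := by
      linear_combination (μ + k*It) * e1 + (μ + k*It) * e3 + k*It*e2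
    have hd : 0 < μ * (r + μ + k*It) := by nlinarith
    have hItΛ : α₂ * It < Λ := by nlinarith [mul_pos hSt hd]
    have hStΛ : St * (r + μ) ≤ Λ := by
      have hnn := hF₂nn St It hSt.le hIt.le
      rw [hH1₂ St It] at hnn
      linarith
    exact ⟨hE, by linarith, hfk, hItΛ, hStΛ⟩
  -- the key strict comparison lemma
  have key : ∀ I₁ I₂ S₁ S₂ V₁ V₂ : ℝ, 0 < I₁ → 0 < I₂ → I₁ < I₂ → α₂*I₁ < Λ → α₂*I₂ < Λ →
      (Λ - α₂*I₁)*(μ+k*I₁) = S₁*(μ*(r+μ+k*I₁)) →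
      (Λ - α₂*I₂)*(μ+k*I₂) = S₂*(μ*(r+μ+k*I₂)) →
      V₁*(μ+k*I₁) = r*S₁ → V₂*(μ+k*I₂) = r*S₂ →
      k*Λ*r - α₂*μ*(r+μ) ≤ α₂*k^2*I₁^2 + 2*α₂*k*(r+μ)*I₁ →
      f₂ S₂ I₂ + k*V₂ < f₂ S₁ I₁ + k*V₁ := by
    intro I₁ I₂ S₁ S₂ V₁ V₂ hI₁ hI₂ hI hΛ₁ hΛ₂ hE₁ hE₂ hV₁ hV₂ hcond
    have hkI₁ : 0 < k*I₁ := mul_pos hk hI₁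
    have hkI₂ : 0 < k*I₂ := mul_pos hk hI₂
    have hd₁ : 0 < μ*(r+μ+k*I₁) := by nlinarith
    have hd₂ : 0 < μ*(r+μ+k*I₂) := by nlinarith
    have hm₁ : 0 < μ + k*I₁ := by linarith
    have hm₂ : 0 < μ + k*I₂ := by linarith
    have hS₁ : 0 < S₁ := by
      have h := mul_pos (show (0:ℝ) < Λ - α₂*I₁ by linarith) hm₁
      rw [hE₁] at h
      exact (mul_pos_iff_of_pos_right hd₁).mp h
    have hS₂ : 0 < S₂ := by
      have h := mul_pos (show (0:ℝ) < Λ - α₂*I₂ by linarith) hm₂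
      rw [hE₂] at h
      exact (mul_pos_iff_of_pos_right hd₂).mp h
    have hQ : 0 ≤ α₂*k^2*I₁*I₂ + α₂*(r+μ)*k*(I₁+I₂) - (k*Λ*r - α₂*μ*(r+μ)) := by
      nlinarith [mul_nonneg (mul_nonneg (mul_nonneg hα₂0.le (sq_nonneg k)) hI₁.le)
          (sub_pos.mpr hI).le,
        mul_nonneg (mul_nonneg (mul_nonneg hα₂0.le hlam0.le) hk.le) (sub_pos.mpr hI).le]
    have hSle : S₂ ≤ S₁ := by
      have e1' : S₁ * ((μ*(r+μ+k*I₂)) * (μ*(r+μ+k*I₁))) =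
          (Λ-α₂*I₁)*(μ+k*I₁)*(μ*(r+μ+k*I₂)) := by
        linear_combination (-(μ*(r+μ+k*I₂))) * hE₁
      have e2' : S₂ * ((μ*(r+μ+k*I₂)) * (μ*(r+μ+k*I₁))) =
          (Λ-α₂*I₂)*(μ+k*I₂)*(μ*(r+μ+k*I₁)) := by
        linear_combination (-(μ*(r+μ+k*I₁))) * hE₂
      have hc : S₂ * ((μ*(r+μ+k*I₂)) * (μ*(r+μ+k*I₁))) ≤
          S₁ * ((μ*(r+μ+k*I₂)) * (μ*(r+μ+k*I₁))) := by
        rw [e1', e2']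
        nlinarith [mul_nonneg (mul_nonneg hμ.le (sub_pos.mpr hI).le) hQ]
      exact le_of_mul_le_mul_right hc (mul_pos hd₂ hd₁)
    have hf2 : f₂ S₂ I₂ ≤ f₂ S₁ I₁ := by
      have h1 : f₂ S₂ I₂ ≤ f₂ S₁ I₂ :=
        hmonoS I₂ hI₂.le (Set.mem_Ici.mpr hS₂.le) (Set.mem_Ici.mpr hS₁.le) hSle
      have h2 : f₂ S₁ I₂ ≤ f₂ S₁ I₁ :=
        hantiI S₁ hS₁.le (Set.mem_Ici.mpr hI₁.le) (Set.mem_Ici.mpr hI₂.le) hI.le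
      linarith
    have hVlt : V₂ < V₁ := by
      have hv₁ : V₁ * (μ*(r+μ+k*I₁)) = r*(Λ - α₂*I₁) := by
        apply mul_right_cancel₀ (ne_of_gt hm₁)
        linear_combination (μ*(r+μ+k*I₁))*hV₁ - r*hE₁
      have hv₂ : V₂ * (μ*(r+μ+k*I₂)) = r*(Λ - α₂*I₂) := by
        apply mul_right_cancel₀ (ne_of_gt hm₂)
        linear_combination (μ*(r+μ+k*I₂))*hV₂ - r*hE₂
      have hc : V₂ * ((μ*(r+μ+k*I₂))*(μ*(r+μ+k*I₁))) <
          V₁ * ((μ*(r+μ+k*I₂))*(μ*(r+μ+k*I₁))) := by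
        have l1 : V₁ * ((μ*(r+μ+k*I₂))*(μ*(r+μ+k*I₁))) =
            r*(Λ - α₂*I₁)*(μ*(r+μ+k*I₂)) := by
          linear_combination (μ*(r+μ+k*I₂))*hv₁
        have l2 : V₂ * ((μ*(r+μ+k*I₂))*(μ*(r+μ+k*I₁))) =
            r*(Λ - α₂*I₂)*(μ*(r+μ+k*I₁)) := by
          linear_combination (μ*(r+μ+k*I₁))*hv₂
        rw [l1, l2]
        nlinarith [mul_pos (mul_pos hr hμ) (mul_pos (sub_pos.mpr hI)
          (show (0:ℝ) < α₂*(r+μ) + k*Λ by positivity))]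
      exact lt_of_mul_lt_mul_right hc (le_of_lt (mul_pos hd₂ hd₁))
    nlinarith [mul_lt_mul_of_pos_left hVlt hk]
  -- general uniqueness lemma (under the h-condition at both points)
  have uniq : ∀ St Vt It St' Vt' It' : ℝ,
      (0 < St ∧ 0 < Vt ∧ 0 < It ∧ Λ - F₂ St It - (r + μ) * St = 0 ∧
        r * St - (μ + k * It) * Vt = 0 ∧ F₂ St It + k * It * Vt - α₂ * It = 0) →
      (0 < St' ∧ 0 < Vt' ∧ 0 < It' ∧ Λ - F₂ St' It' - (r + μ) * St' = 0 ∧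
        r * St' - (μ + k * It') * Vt' = 0 ∧ F₂ St' It' + k * It' * Vt' - α₂ * It' = 0) →
      k*Λ*r - α₂*μ*(r+μ) ≤ α₂*k^2*It^2 + 2*α₂*k*(r+μ)*It →
      k*Λ*r - α₂*μ*(r+μ) ≤ α₂*k^2*It'^2 + 2*α₂*k*(r+μ)*It' →
      St = St' ∧ Vt = Vt' ∧ It = It' := by
    intro St Vt It St' Vt' It' h1 h2 hc1 hc2
    obtain ⟨hSt, hVt, hIt, e1, e2, e3⟩ := h1
    obtain ⟨hSt', hVt', hIt', e1', e2', e3'⟩ := h2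
    obtain ⟨hE, hVe, hfk, hItΛ, _⟩ := hchar St Vt It hSt hVt hIt e1 e2 e3
    obtain ⟨hE', hVe', hfk', hItΛ', _⟩ := hchar St' Vt' It' hSt' hVt' hIt' e1' e2' e3'
    have hII : It = It' := by
      rcases lt_trichotomy It It' with h | h | h
      · exfalso
        have := key It It' St St' Vt Vt' hIt hIt' h hItΛ hItΛ' hE hE' hVe hVe' hc1
        linarith
      · exact h
      · exfalso
        have := key It' It St' St Vt' Vt hIt' hIt h hItΛ' hItΛ hE' hE hVe' hVe hc2
        linarith
    subst hII
    have hkIt : 0 < k*It := mul_pos hk hIt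
    have hd : 0 < μ*(r+μ+k*It) := by nlinarith
    have hm : 0 < μ + k*It := by linarith
    have hSS : St = St' := by
      apply mul_right_cancel₀ (ne_of_gt hd)
      linarith [hE, hE']
    have hVV : Vt = Vt' := by
      apply mul_right_cancel₀ (ne_of_gt hm)
      rw [hVe, hVe', hSS]
    exact ⟨hSS, hVV, rfl⟩
  refine ⟨⟨?_, ?_⟩, ?_, ?_⟩
  · -- existence → R₂ > 1
    rintro ⟨St, Vt, It, hSt, hVt, hIt, e1, e2, e3⟩
    obtain ⟨hE, hVe, hfk, hItΛ, hStΛ⟩ := hchar St Vt It hSt hVt hIt e1 e2 e3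
    have hStS0 : St ≤ Λ/(r+μ) := by rw [le_div_iff₀ hlam0]; linarith
    have h1 : f₂ St It ≤ f₂ (Λ/(r+μ)) It :=
      hmonoS It hIt.le (Set.mem_Ici.mpr hSt.le) (Set.mem_Ici.mpr hS00) hStS0
    have h2 : f₂ (Λ/(r+μ)) It ≤ f₂ (Λ/(r+μ)) 0 :=
      hantiI _ hS00 (Set.mem_Ici.mpr le_rfl) (Set.mem_Ici.mpr hIt.le) hIt.le
    have hkIt : 0 < k*It := mul_pos hk hIt
    have hm : 0 < μ + k*It := by linarith
    have h3 : Vt * μ < r * St := by nlinarith [mul_pos hVt hkIt]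
    have h4 : Vt < r*Λ/(μ*(r+μ)) := by
      rw [lt_div_iff₀ (by positivity)]
      nlinarith [mul_le_mul_of_nonneg_left hStS0 hr.le,
        mul_lt_mul_of_pos_right h3 hlam0, (le_div_iff₀ hlam0).mp (le_refl (Λ/(r+μ)))]
    have hVb : k*Vt < k*r*Λ/(μ*(r+μ)) := by
      have := mul_lt_mul_of_pos_left h4 hk
      have heq : k*(r*Λ/(μ*(r+μ))) = k*r*Λ/(μ*(r+μ)) := by ring
      linarith [heq ▸ this]
    have hcomb : α₂ < f₂ (Λ/(r+μ)) 0 + k*r*Λ/(μ*(r+μ)) := by linarith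
    rw [hR₂, hσ]
    have hrw : f₂ (Λ/(r+μ)) 0 / α₂ + k * r * Λ / (α₂ * μ * (r+μ)) =
        (f₂ (Λ/(r+μ)) 0 + k*r*Λ/(μ*(r+μ))) / α₂ := by
      field_simp
    rw [hrw, lt_div_iff₀ hα₂0, one_mul]
    exact hcomb
  · -- R₂ > 1 → existence
    intro hR
    have hc0 : 0 < Λ/α₂ := div_pos hΛ hα₂0
    have hSfc : ContinuousOn (fun I => (Λ-α₂*I)*(μ+k*I)/(μ*(r+μ+k*I))) (Set.Icc 0 (Λ/α₂)) := by
      apply ContinuousOn.div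
      · fun_prop
      · fun_prop
      · intro x hx
        have hx0 := hx.1
        have : 0 < μ*(r+μ+k*x) := by nlinarith [mul_nonneg hk.le hx0]
        exact ne_of_gt this
    have hSfnn : ∀ x ∈ Set.Icc (0:ℝ) (Λ/α₂), 0 ≤ (Λ-α₂*x)*(μ+k*x)/(μ*(r+μ+k*x)) := by
      intro x hx
      have hx0 := hx.1
      have hx1 : x * α₂ ≤ Λ := (le_div_iff₀ hα₂0).mp hx.2
      apply div_nonneg
      · apply mul_nonneg
        · linarith
        · nlinarith [mul_nonneg hk.le hx0]
      · nlinarith [mul_nonneg hk.le hx0]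
    have hgc : ContinuousOn (fun I => f₂ ((Λ-α₂*I)*(μ+k*I)/(μ*(r+μ+k*I))) I
        + k*r*((Λ-α₂*I)*(μ+k*I)/(μ*(r+μ+k*I)))/(μ+k*I) - α₂) (Set.Icc 0 (Λ/α₂)) := by
      apply ContinuousOn.sub
      · apply ContinuousOn.add
        · refine (hf₂C1.continuousOn).comp (hSfc.prodMk continuousOn_id) ?_
          intro x hx; exact ⟨hSfnn x hx, hx.1⟩
        · apply ContinuousOn.div
          · exact continuousOn_const.mul hSfc
          · fun_prop
          · intro x hx
            have hx0 := hx.1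
            have : 0 < μ + k*x := by nlinarith [mul_nonneg hk.le hx0]
            exact ne_of_gt this
      · exact continuousOn_const
    have hSf0 : (Λ-α₂*0)*(μ+k*0)/(μ*(r+μ+k*0)) = Λ/(r+μ) := by
      rw [div_eq_div_iff (by positivity) (by positivity)]
      ring
    have hg0 : 0 < f₂ ((Λ-α₂*0)*(μ+k*0)/(μ*(r+μ+k*0))) 0
        + k*r*((Λ-α₂*0)*(μ+k*0)/(μ*(r+μ+k*0)))/(μ+k*0) - α₂ := by
      rw [hSf0]
      have hRα : α₂ * R₂ = f₂ (Λ/(r+μ)) 0 + k*r*Λ/(μ*(r+μ)) := by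
        rw [hR₂, hσ]
        field_simp
      have hlt : α₂ < f₂ (Λ/(r+μ)) 0 + k*r*Λ/(μ*(r+μ)) := by nlinarith
      have heq2 : k*r*(Λ/(r+μ))/(μ+k*0) = k*r*Λ/(μ*(r+μ)) := by
        rw [mul_zero, add_zero]
        field_simp
      rw [heq2]
      linarith
    have hnumc : Λ - α₂*(Λ/α₂) = 0 := by field_simp; ring
    have hf20 : f₂ 0 (Λ/α₂) = 0 := by
      have h := (hF₂zero 0 (Λ/α₂) le_rfl hc0.le).1
      rw [hH1₂] at h
      exact (mul_eq_zero.mp h).resolve_left (ne_of_gt hc0)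
    have hgceq : f₂ ((Λ-α₂*(Λ/α₂))*(μ+k*(Λ/α₂))/(μ*(r+μ+k*(Λ/α₂)))) (Λ/α₂)
        + k*r*((Λ-α₂*(Λ/α₂))*(μ+k*(Λ/α₂))/(μ*(r+μ+k*(Λ/α₂))))/(μ+k*(Λ/α₂)) - α₂ = -α₂ := by
      rw [hnumc, zero_mul, zero_div, hf20]
      norm_num
    have h0mem : (0:ℝ) ∈ Set.Icc
        ((fun I => f₂ ((Λ-α₂*I)*(μ+k*I)/(μ*(r+μ+k*I))) I
          + k*r*((Λ-α₂*I)*(μ+k*I)/(μ*(r+μ+k*I)))/(μ+k*I) - α₂) (Λ/α₂))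
        ((fun I => f₂ ((Λ-α₂*I)*(μ+k*I)/(μ*(r+μ+k*I))) I
          + k*r*((Λ-α₂*I)*(μ+k*I)/(μ*(r+μ+k*I)))/(μ+k*I) - α₂) 0) := by
      simp only
      constructor
      · rw [hgceq]; linarith
      · exact hg0.le
    obtain ⟨I₀, hI₀mem, hgI₀⟩ := intermediate_value_Icc' hc0.le hgc h0mem
    simp only at hgI₀
    have hI₀pos : 0 < I₀ := by
      rcases hI₀mem.1.lt_or_eq with h | h
      · exact h
      · exfalso; rw [← h] at hgI₀; linarith
    have hI₀c : I₀ < Λ/α₂ := by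
      rcases hI₀mem.2.lt_or_eq with h | h
      · exact h
      · exfalso; rw [h, hgceq] at hgI₀; linarith
    have hkI₀ : 0 < k*I₀ := mul_pos hk hI₀pos
    have hm : 0 < μ + k*I₀ := by linarith
    have hd : 0 < μ*(r+μ+k*I₀) := by nlinarith
    have hnum : 0 < Λ - α₂*I₀ := by
      have := (lt_div_iff₀ hα₂0).mp hI₀c
      nlinarith
    set SS : ℝ := (Λ-α₂*I₀)*(μ+k*I₀)/(μ*(r+μ+k*I₀)) with hSSdef
    have hSSpos : 0 < SS := div_pos (mul_pos hnum hm) hd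
    have hE' : SS*(μ*(r+μ+k*I₀)) = (Λ-α₂*I₀)*(μ+k*I₀) := div_mul_cancel₀ _ (ne_of_gt hd)
    have hg'' : f₂ SS I₀ * (μ+k*I₀) + k*r*SS - α₂*(μ+k*I₀) = 0 := by
      have h := congrArg (fun z => z * (μ+k*I₀)) hgI₀
      simp only [zero_mul] at h
      rw [sub_mul, add_mul, div_mul_cancel₀ _ (ne_of_gt hm)] at h
      linarith
    refine ⟨SS, r*SS/(μ+k*I₀), I₀, hSSpos, div_pos (mul_pos hr hSSpos) hm, hI₀pos, ?_, ?_, ?_⟩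
    · -- first equation
      rw [hH1₂]
      have e1' : (Λ - I₀ * f₂ SS I₀ - (r+μ)*SS) * ((μ+k*I₀)*(μ*(r+μ+k*I₀))) = 0 := by
        linear_combination (-(I₀*(μ*(r+μ+k*I₀))))*hg'' + (k*r*I₀ - (r+μ)*(μ+k*I₀))*hE'
      have hne : ((μ+k*I₀)*(μ*(r+μ+k*I₀))) ≠ 0 := ne_of_gt (mul_pos hm hd)
      have := (mul_eq_zero.mp e1').resolve_right hne
      linarith
    · field_simp; ring
    · rw [hH1₂]
      linear_combination I₀ * hgI₀
  · -- uniqueness when Δ < 0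
    intro hΔ St Vt It St' Vt' It' h1 h2
    have hc1 : k*Λ*r - α₂*μ*(r+μ) ≤ α₂*k^2*It^2 + 2*α₂*k*(r+μ)*It := by
      have hIt := h1.2.2.1
      nlinarith [sq_nonneg (k*It), mul_pos hk hIt, mul_pos hα₂0 (mul_pos hk hIt)]
    have hc2 : k*Λ*r - α₂*μ*(r+μ) ≤ α₂*k^2*It'^2 + 2*α₂*k*(r+μ)*It' := by
      have hIt' := h2.2.2.1
      nlinarith [sq_nonneg (k*It'), mul_pos hk hIt', mul_pos hα₂0 (mul_pos hk hIt')]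
    exact uniq St Vt It St' Vt' It' h1 h2 hc1 hc2
  · -- uniqueness when Δ > 0, on the interval
    intro hΔ St Vt It St' Vt' It' h1 h2
    obtain ⟨hSt, hVt, hIt, e1, e2, e3, hmem⟩ := h1
    obtain ⟨hSt', hVt', hIt', e1', e2', e3', hmem'⟩ := h2
    have hαk : 0 < α₂*k := mul_pos hα₂0 hk
    have hDnn : 0 ≤ r*α₂*(r*α₂+α₂*μ+k*Λ) := by positivity
    have hcond : ∀ J : ℝ,
        (-(r * α₂) - α₂ * μ + Real.sqrt (r * α₂ * (r * α₂ + α₂ * μ + k * Λ))) / (α₂ * k) ≤ J →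
        k*Λ*r - α₂*μ*(r+μ) ≤ α₂*k^2*J^2 + 2*α₂*k*(r+μ)*J := by
      intro J hJ
      have h1' : -(r*α₂) - α₂*μ + Real.sqrt (r*α₂*(r*α₂+α₂*μ+k*Λ)) ≤ J*(α₂*k) :=
        (div_le_iff₀ hαk).mp hJ
      have hs : Real.sqrt (r*α₂*(r*α₂+α₂*μ+k*Λ)) ≤ α₂*k*J + r*α₂ + α₂*μ := by nlinarith
      have hsq : r*α₂*(r*α₂+α₂*μ+k*Λ) ≤ (α₂*k*J + r*α₂ + α₂*μ)^2 := by
        nlinarith [Real.sq_sqrt hDnn, Real.sqrt_nonneg (r*α₂*(r*α₂+α₂*μ+k*Λ)), hs]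
      nlinarith [hsq, hα₂0]
    exact uniq St Vt It St' Vt' It' ⟨hSt, hVt, hIt, e1, e2, e3⟩
      ⟨hSt', hVt', hIt', e1', e2', e3'⟩ (hcond It hmem.1) (hcond It' hmem'.1)
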